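/- Let |ψ⟩ = (1/√d) ∑_i |i⟩⊗|i⟩, and let {|φ_x^a⟩}_{a} be an orthonormal basis of ℂ^d for each x. If Alice measures the projective measurement {|φ_x^{*a}⟩⟨φ_x^{*a}|}_a (where |φ_x^{*a}⟩ = ∑_i ⟨φ_x^a|i⟩|i⟩) on the first subsystem, then the resulting assemblage ρ_{a|x} = Tr_A[(|φ_x^{*a}⟩⟨φ_x^{*a}| ⊗ I)|ψ⟩⟨ψ|] = (1/d)|φ_x^a⟩⟨φ_x^a| is not unsteerable whenever the bases for two different x values are mutually unbiased and d ≥ 2. -/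

import Mathlib

open Matrix Finset Filter
open scoped ComplexOrder

noncomputable def expec {d : ℕ} (ρ : Matrix (Fin d) (Fin d) ℂ) (v : Fin d → ℂ) : ℝ :=
  Complex.re (dotProduct (star v) (ρ.mulVec v))

def IsDensity {d : ℕ} (ρ : Matrix (Fin d) (Fin d) ℂ) : Prop :=
  ρ.PosSemidef ∧ ρ.trace = 1

def IsMUBFamily {d n : ℕ} (φ : Fin n → Fin d → Fin d → ℂ) : Prop :=
  (∀ x a b, dotProduct (star (φ x a)) (φ x b) = if a = b then 1 else 0) ∧
  (∀ x y a b, x ≠ y → ‖dotProduct (star (φ x a)) (φ y b)‖ = 1 / Real.sqrt d)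

noncomputable def outer {d : ℕ} (v : Fin d → ℂ) : Matrix (Fin d) (Fin d) ℂ :=
  vecMulVec v (star v)

noncomputable def gibbs {d : ℕ} (β : ℝ) (H : Matrix (Fin d) (Fin d) ℂ) : Matrix (Fin d) (Fin d) ℂ :=
  (NormedSpace.exp ((-β : ℂ) • H)).trace⁻¹ • NormedSpace.exp ((-β : ℂ) • H)
/-- An assemblage admits a local-hidden-state (unsteerable) decomposition. -/
def Unsteerable {d n : ℕ} (ρ : Fin d → Fin n → Matrix (Fin d) (Fin d) ℂ) : Prop :=
  ∃ (m : ℕ) (p : Fin m → ℝ) (q : Fin n → Fin m → Fin d → ℝ)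
    (σ : Fin m → Matrix (Fin d) (Fin d) ℂ),
    (∀ l, 0 ≤ p l) ∧ (∑ l, p l = 1) ∧ (∀ x l a, 0 ≤ q x l a) ∧
    (∀ x l, ∑ a, q x l a = 1) ∧ (∀ l, IsDensity (σ l)) ∧
    ∀ a x, ρ a x = ∑ l, (p l * q x l a) • σ l

/- ### Auxiliary lemmas -/

lemma outer_mulVec {d : ℕ} (v w : Fin d → ℂ) :
    (outer v) *ᵥ w = (star v ⬝ᵥ w) • v := by
  funext i
  simp [outer, vecMulVec, mulVec, dotProduct, Finset.mul_sum, mul_comm, mul_left_comm]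

lemma outer_apply {d : ℕ} (v : Fin d → ℂ) (i j : Fin d) :
    outer v i j = v i * star (v j) := rfl

lemma trace_outer {d : ℕ} (v : Fin d → ℂ) : (outer v).trace = star v ⬝ᵥ v := by
  simp [Matrix.trace, Matrix.diag, outer_apply, dotProduct, mul_comm]

lemma sum_mulVec' {d m : ℕ} (A : Fin m → Matrix (Fin d) (Fin d) ℂ) (w : Fin d → ℂ) :
    (∑ l, A l) *ᵥ w = ∑ l, (A l) *ᵥ w := by
  funext i
  simp [mulVec, dotProduct, Finset.sum_apply, Finset.sum_mul, Matrix.sum_apply]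
  rw [Finset.sum_comm]

lemma dotProduct_sum' {d m : ℕ} (w : Fin d → ℂ) (v : Fin m → Fin d → ℂ) :
    w ⬝ᵥ (∑ l, v l) = ∑ l, w ⬝ᵥ v l := by
  simp [dotProduct, Finset.mul_sum, Finset.sum_apply]
  rw [Finset.sum_comm]

/-- A density matrix whose quadratic form vanishes on the orthogonal complement of a
unit vector `u` must equal `outer u`. -/
lemma support_lemma {d : ℕ} {σ : Matrix (Fin d) (Fin d) ℂ} (hσ : IsDensity σ)
    {u : Fin d → ℂ} (hu : star u ⬝ᵥ u = 1)
    (hker : ∀ w, star u ⬝ᵥ w = 0 → star w ⬝ᵥ σ *ᵥ w = 0) : σ = outer u := by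
  have hker0 : ∀ w, star u ⬝ᵥ w = 0 → σ *ᵥ w = 0 := fun w hw =>
    (hσ.1.dotProduct_mulVec_zero_iff w).mp (hker w hw)
  have hherm : σᴴ = σ := hσ.1.1
  obtain ⟨t, hA⟩ : ∃ t : ℂ, σ *ᵥ u = t • u := by
    refine ⟨star u ⬝ᵥ σ *ᵥ u, ?_⟩
    set t : ℂ := star u ⬝ᵥ σ *ᵥ u
    have h1 : star u ⬝ᵥ (σ *ᵥ u - t • u) = 0 := by
      rw [dotProduct_sub, dotProduct_smul, hu, smul_eq_mul, mul_one, sub_self]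
    have h2 : σ *ᵥ (σ *ᵥ u - t • u) = 0 := hker0 _ h1
    have hru : star (σ *ᵥ u - t • u) ⬝ᵥ u = 0 := by
      have := congrArg star h1
      rwa [star_dotProduct, star_star, star_zero] at this
    have hrσu : star (σ *ᵥ u - t • u) ⬝ᵥ (σ *ᵥ u) = 0 := by
      have h3 : star u ⬝ᵥ (σ *ᵥ (σ *ᵥ u - t • u)) = 0 := by rw [h2, dotProduct_zero]
      have := congrArg star h3
      rwa [star_dotProduct, star_star, star_mulVec, ← dotProduct_mulVec, hherm,
        star_zero] at this
    have h4 : star (σ *ᵥ u - t • u) ⬝ᵥ (σ *ᵥ u - t • u) = 0 := by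
      rw [dotProduct_sub, dotProduct_smul, hrσu, hru, smul_eq_mul, mul_zero, sub_zero]
    exact sub_eq_zero.mp ((dotProduct_star_self_eq_zero).mp h4)
  have hB : ∀ v, σ *ᵥ v = (t * (star u ⬝ᵥ v)) • u := by
    intro v
    have hw : star u ⬝ᵥ (v - (star u ⬝ᵥ v) • u) = 0 := by
      rw [dotProduct_sub, dotProduct_smul, hu, smul_eq_mul, mul_one, sub_self]
    have h2 := hker0 _ hw
    rw [mulVec_sub, mulVec_smul, sub_eq_zero] at h2
    rw [h2, hA, smul_smul, mul_comm]
  have hC : σ = t • outer u := by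
    ext i j
    have := congrFun (hB (Pi.single j 1)) i
    simp only [mulVec_single, mul_one, MulOpposite.op_one, one_smul, col_apply] at this
    rw [this]
    simp [outer_apply, dotProduct, Pi.single_apply, smul_eq_mul]
    ring
  have htr : t = 1 := by
    have h7 := hσ.2
    rw [hC, trace_smul, trace_outer, hu, smul_eq_mul, mul_one] at h7
    exact h7
  rw [hC, htr, one_smul]

/-- The assemblage (1/d)|φ_x^a⟩⟨φ_x^a| obtained from the maximally entangled state
by measuring mutually unbiased bases is steerable (not unsteerable). -/
theorem maxEnt_assemblage_steerable {d n : ℕ} (hd : 2 ≤ d) (hn : 2 ≤ n)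
    (φ : Fin n → Fin d → Fin d → ℂ)
    (horth : ∀ x a b, dotProduct (star (φ x a)) (φ x b) = if a = b then 1 else 0)
    (hmub : ∀ x y a b, x ≠ y →
      ‖dotProduct (star (φ x a)) (φ y b)‖ = 1 / Real.sqrt d) :
    ¬ Unsteerable (fun a x => ((d : ℝ)⁻¹) • outer (φ x a)) := by
  rintro ⟨m, p, q, σ, hp, hpsum, hq, hqsum, hσ, heq⟩
  -- pick a hidden variable with positive weight
  obtain ⟨l, hl⟩ : ∃ l, 0 < p l := by
    by_contra h'
    push_neg at h'
    have hz : ∑ l, p l = 0 := Finset.sum_eq_zero fun l _ => le_antisymm (h' l) (hp l)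
    rw [hz] at hpsum; norm_num at hpsum
  -- key: any outcome with positive response probability pins down σ l
  have key : ∀ (x : Fin n) (a : Fin d), 0 < q x l a → σ l = outer (φ x a) := by
    intro x a ha
    have hu : star (φ x a) ⬝ᵥ φ x a = 1 := by simpa using horth x a a
    refine support_lemma (hσ l) hu ?_
    intro w hw
    have h1 : ((d : ℝ)⁻¹) • outer (φ x a) = ∑ l', (p l' * q x l' a) • σ l' := heq a x
    have hz : star w ⬝ᵥ (((d : ℝ)⁻¹) • outer (φ x a)) *ᵥ w = 0 := by
      rw [smul_mulVec, outer_mulVec, hw, zero_smul, smul_zero, dotProduct_zero]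
    rw [h1, sum_mulVec', dotProduct_sum'] at hz
    have hnn : ∀ l' ∈ (univ : Finset (Fin m)),
        0 ≤ star w ⬝ᵥ ((p l' * q x l' a) • σ l') *ᵥ w := by
      intro l' _
      rw [smul_mulVec, dotProduct_smul, Complex.real_smul]
      exact mul_nonneg (by exact_mod_cast mul_nonneg (hp l') (hq x l' a)) ((hσ l').1.dotProduct_mulVec_nonneg w)
    have hterm := (Finset.sum_eq_zero_iff_of_nonneg hnn).mp hz l (mem_univ l)
    rw [smul_mulVec, dotProduct_smul, smul_eq_zero] at hterm
    rcases hterm with h | h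
    · exact absurd h (mul_pos hl ha).ne'
    · exact h
  -- two different measurement settings
  have h0n : 0 < n := by omega
  have h1n : 1 < n := by omega
  set x0 : Fin n := ⟨0, h0n⟩
  set x1 : Fin n := ⟨1, h1n⟩
  have hxne : x1 ≠ x0 := by simp [x0, x1, Fin.ext_iff]
  obtain ⟨a0, ha0⟩ : ∃ a, 0 < q x0 l a := by
    by_contra h'
    push_neg at h'
    have hz : ∑ a, q x0 l a = 0 := Finset.sum_eq_zero fun a _ => le_antisymm (h' a) (hq x0 l a)
    have := hqsum x0 l
    rw [hz] at this; norm_num at this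
  obtain ⟨a1, ha1⟩ : ∃ a, 0 < q x1 l a := by
    by_contra h'
    push_neg at h'
    have hz : ∑ a, q x1 l a = 0 := Finset.sum_eq_zero fun a _ => le_antisymm (h' a) (hq x1 l a)
    have := hqsum x1 l
    rw [hz] at this; norm_num at this
  have e : outer (φ x0 a0) = outer (φ x1 a1) :=
    (key x0 a0 ha0).symm.trans (key x1 a1 ha1)
  set u0 := φ x0 a0
  set u1 := φ x1 a1
  have hu0 : star u0 ⬝ᵥ u0 = 1 := by simpa using horth x0 a0 a0
  have habs : ‖star u1 ⬝ᵥ u0‖ = 1 / Real.sqrt d := hmub x1 x0 a1 a0 hxne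
  have key2 := congrArg (fun M => star u0 ⬝ᵥ M *ᵥ u0) e
  simp only [outer_mulVec, dotProduct_smul, smul_eq_mul] at key2
  rw [hu0, mul_one] at key2
  -- key2 : 1 = (star u1 ⬝ᵥ u0) * (star u0 ⬝ᵥ u1)
  have hconj : star u0 ⬝ᵥ u1 = star (star u1 ⬝ᵥ u0) := star_dotProduct _ _
  rw [hconj] at key2
  have hns : (star u1 ⬝ᵥ u0) * star (star u1 ⬝ᵥ u0) = ((‖star u1 ⬝ᵥ u0‖)^2 : ℝ) := by
    rw [Complex.sq_norm]
    exact_mod_cast Complex.mul_conj _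
  rw [hns, habs] at key2
  have hd0 : (0:ℝ) ≤ (d:ℝ) := Nat.cast_nonneg d
  have hsq : ((1 : ℝ) / Real.sqrt d)^2 = 1 / d := by
    rw [div_pow, one_pow, Real.sq_sqrt hd0]
  rw [hsq] at key2
  have hr : (1 : ℝ) = 1 / (d:ℝ) := by exact_mod_cast key2
  have hd2 : (2:ℝ) ≤ (d:ℝ) := by exact_mod_cast hd
  rw [eq_div_iff (by linarith)] at hr
  linarith
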